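/- The linear transformation B is injective on U: if p ∈ U and B(p)(x) = 0 for every x ∈ ℝ with η(x) ≠ 0, then p is the zero polynomial. -/

import Mathlib

noncomputable section

/-- Physicists' Hermite polynomials indexed by naturals. -/
def hermN : ℕ → Polynomial ℝ
  | 0 => 1
  | 1 => Polynomial.C 2 * Polynomial.X
  | (n + 2) => Polynomial.C 2 * Polynomial.X * hermN (n + 1)
      - Polynomial.C (2 * ((n : ℝ) + 1)) * hermN n

/-- Physicists' Hermite polynomials indexed by integers, `0` for negative index. -/
def Herm (n : ℤ) : Polynomial ℝ := if 0 ≤ n then hermN n.toNat else 0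

/-- Hermite polynomial as a real function. -/
def H (n : ℤ) : ℝ → ℝ := fun x => (Herm n).eval x

/-- The Wronskian determinant of a finite family of functions. -/
def Wr {m : ℕ} (f : Fin m → ℝ → ℝ) (x : ℝ) : ℝ :=
  Matrix.det (Matrix.of fun i j : Fin m => iteratedDeriv (j : ℕ) (f i) x)

/-- `eta k j x = Wr[H_{k 1}, …, H_{k j}](x)` (1-indexed), with `eta k 0 = 1`. -/
def eta (k : ℕ → ℕ) (j : ℕ) : ℝ → ℝ :=
  fun x => Wr (fun i : Fin j => H (k (i.1 + 1) : ℤ)) x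

/-- `h̃_j`: the Wronskian of `H_{k 1}, …, H_{k l}` with the `j`-th entry omitted. -/
def htil (k : ℕ → ℕ) (l j : ℕ) : ℝ → ℝ :=
  fun x => Wr (fun i : Fin (l - 1) =>
    H (k (if i.1 + 1 < j then i.1 + 1 else i.1 + 2) : ℤ)) x

/-- The order-`l` operator
`B(y)(x) = (-1)^⌊l/2⌋ e^{x²} η(x)^{-l} Wr[h̃_1, …, h̃_l, e^{-x²} y](x)`. -/
def Bop (k : ℕ → ℕ) (l : ℕ) (y : ℝ → ℝ) : ℝ → ℝ :=
  fun x => (-1 : ℝ) ^ (l / 2) * Real.exp (x ^ 2) / (eta k l x) ^ l *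
    Wr (Fin.snoc (fun i : Fin l => htil k l (i.1 + 1))
      (fun t => Real.exp (-t ^ 2) * y t)) x

/-- `N = (Σ_{i=1}^l k_i) - l(l-1)/2`. -/
def Nval (k : ℕ → ℕ) (l : ℕ) : ℤ :=
  (∑ i ∈ Finset.range l, (k (i + 1) : ℤ)) - (l * (l - 1) / 2 : ℕ)

/-- The Wronskian of a finite family of polynomials. -/
def WrP {m : ℕ} (f : Fin m → Polynomial ℝ) : Polynomial ℝ :=
  Matrix.det (Matrix.of fun i j : Fin m => (Polynomial.derivative)^[j.1] (f i))

/-- `η = Wr[H_{k 1}, …, H_{k l}]` as a polynomial. -/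
def etaP (k : ℕ → ℕ) (l : ℕ) : Polynomial ℝ :=
  WrP (fun i : Fin l => Herm (k (i.1 + 1) : ℤ))

/-- The exceptional Hermite polynomial `ĥ(n) = Wr[H_{k 1},…,H_{k l}, H_{n+l-N}]`
as a polynomial. -/
def hhatP (k : ℕ → ℕ) (l : ℕ) (n : ℤ) : Polynomial ℝ :=
  WrP (Fin.snoc (fun i : Fin l => Herm (k (i.1 + 1) : ℤ)) (Herm (n + l - Nval k l)))

/-- The degree set `I = {n : N - l ≤ n, n + l - N ∉ {k_1,…,k_l}}`. -/
def Iset (k : ℕ → ℕ) (l : ℕ) : Set ℤ :=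
  {n | Nval k l - l ≤ n ∧ ∀ i, 1 ≤ i → i ≤ l → n + l - Nval k l ≠ (k i : ℤ)}

/-- `U`: the linear span of the exceptional Hermite polynomials. -/
def Uspan (k : ℕ → ℕ) (l : ℕ) : Submodule ℝ (Polynomial ℝ) :=
  Submodule.span ℝ ((fun n => hhatP k l n) '' Iset k l)


set_option linter.unusedSectionVars false
set_option maxHeartbeats 1000000

section AuxLemmas
open Polynomial Finset


/-- Coefficient-bound predicate with an integer bound. -/
def CBnd (p : Polynomial ℝ) (b : ℤ) : Prop := ∀ t : ℕ, b < (t : ℤ) → p.coeff t = 0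

lemma CBnd.mono {p : Polynomial ℝ} {b b' : ℤ} (h : CBnd p b) (hb : b ≤ b') : CBnd p b' :=
  fun t ht => h t (lt_of_le_of_lt hb ht)

lemma cbnd_of_natDegree_le {p : Polynomial ℝ} {b : ℤ} (h : (p.natDegree : ℤ) ≤ b) : CBnd p b := by
  intro t ht
  exact Polynomial.coeff_eq_zero_of_natDegree_lt (by exact_mod_cast lt_of_le_of_lt h ht)

lemma cbnd_prod {ι : Type*} (s : Finset ι) (f : ι → Polynomial ℝ) (b : ι → ℤ)
    (h : ∀ i ∈ s, CBnd (f i) (b i)) : CBnd (∏ i ∈ s, f i) (∑ i ∈ s, b i) := by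
  classical
  induction s using Finset.induction_on with
  | empty =>
      intro t ht
      simp only [Finset.prod_empty, Finset.sum_empty] at *
      have : t ≠ 0 := by omega
      simp [Polynomial.coeff_one, this]
  | @insert a s' ha ih =>
      intro t ht
      rw [Finset.prod_insert ha, Polynomial.coeff_mul]
      apply Finset.sum_eq_zero
      rintro ⟨u, v⟩ huv
      rw [Finset.HasAntidiagonal.mem_antidiagonal] at huv
      rw [Finset.sum_insert ha] at ht
      by_cases hu : b a < (u : ℤ)
      · rw [h a (Finset.mem_insert_self a s') u hu, zero_mul]
      · have hv : (∑ i ∈ s', b i) < (v : ℤ) := by push_neg at hu; omega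
        rw [ih (fun i hi => h i (Finset.mem_insert_of_mem hi)) v hv, mul_zero]

lemma coeff_prod_cbnd {ι : Type*} (s : Finset ι) (f : ι → Polynomial ℝ) (b : ι → ℤ)
    (h : ∀ i ∈ s, CBnd (f i) (b i)) (D : ℕ) (hD : (D : ℤ) = ∑ i ∈ s, b i) :
    (∏ i ∈ s, f i).coeff D = ∏ i ∈ s, (f i).coeff (b i).toNat := by
  classical
  induction s using Finset.induction_on generalizing D with
  | empty => simp at hD; simp [hD]
  | @insert a s' ha ih =>
      rw [Finset.sum_insert ha] at hD
      rw [Finset.prod_insert ha, Finset.prod_insert ha, Polynomial.coeff_mul]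
      by_cases hbs : (∑ i ∈ s', b i) < 0
      · have h2 : ∀ v : ℕ, (∏ i ∈ s', f i).coeff v = 0 := fun v =>
          cbnd_prod s' f b (fun i hi => h i (Finset.mem_insert_of_mem hi)) v (by omega)
        have hL : ∑ x ∈ antidiagonal D, (f a).coeff x.1 * (∏ x ∈ s', f x).coeff x.2 = 0 := by
          apply Finset.sum_eq_zero
          rintro ⟨u, v⟩ _
          rw [h2, mul_zero]
        obtain ⟨i, hi, hbi⟩ : ∃ i ∈ s', b i < 0 := by
          by_contra hcon
          push_neg at hcon
          have : (0 : ℤ) ≤ ∑ i ∈ s', b i := Finset.sum_nonneg hcon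
          omega
        have hR : (f i).coeff (b i).toNat = 0 :=
          h i (Finset.mem_insert_of_mem hi) _ (by omega)
        rw [hL, Finset.prod_eq_zero hi hR, mul_zero]
      · by_cases hba : b a < 0
        · have h1 : ∀ u : ℕ, (f a).coeff u = 0 := fun u =>
            h a (Finset.mem_insert_self a s') u (by omega)
          have hL : ∑ x ∈ antidiagonal D, (f a).coeff x.1 * (∏ x ∈ s', f x).coeff x.2 = 0 := by
            apply Finset.sum_eq_zero
            rintro ⟨u, v⟩ _
            rw [h1, zero_mul]
          rw [hL, h1, zero_mul]
        · push_neg at hba hbs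
          have hmem : ((b a).toNat, (∑ i ∈ s', b i).toNat) ∈ Finset.HasAntidiagonal.antidiagonal D := by
            rw [Finset.HasAntidiagonal.mem_antidiagonal]; omega
          rw [Finset.sum_eq_single_of_mem _ hmem]
          · rw [ih (fun i hi => h i (Finset.mem_insert_of_mem hi)) _ (by omega)]
          · rintro ⟨u, v⟩ huv hne
            rw [Finset.HasAntidiagonal.mem_antidiagonal] at huv
            by_cases hu : b a < (u : ℤ)
            · rw [h a (Finset.mem_insert_self a s') u hu, zero_mul]
            · have hv : (∑ i ∈ s', b i) < (v : ℤ) := by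
                push_neg at hu
                rcases lt_or_eq_of_le hu with hu' | hu'
                · omega
                · exfalso
                  have hu2 : u = (b a).toNat := by omega
                  have hv2 : v = (∑ i ∈ s', b i).toNat := by omega
                  exact hne (by rw [hu2, hv2])
              rw [cbnd_prod s' f b (fun i hi => h i (Finset.mem_insert_of_mem hi)) v hv, mul_zero]

lemma cbnd_mul {p q : Polynomial ℝ} {a bq : ℤ} (hp : CBnd p a) (hq : CBnd q bq) :
    CBnd (p * q) (a + bq) := by
  intro t ht
  rw [Polynomial.coeff_mul]
  apply Finset.sum_eq_zero
  rintro ⟨u, v⟩ huv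
  rw [Finset.HasAntidiagonal.mem_antidiagonal] at huv
  by_cases hu : a < (u : ℤ)
  · rw [hp u hu, zero_mul]
  · have : bq < (v : ℤ) := by push_neg at hu; omega
    rw [hq v this, mul_zero]

lemma coeff_mul_cbnd {p q : Polynomial ℝ} {a bq : ℤ} (hp : CBnd p a) (hq : CBnd q bq)
    (D : ℕ) (hD : (D : ℤ) = a + bq) :
    (p * q).coeff D = p.coeff a.toNat * q.coeff bq.toNat := by
  classical
  have := coeff_prod_cbnd (s := ({0, 1} : Finset (Fin 2))) (f := ![p, q]) (b := ![a, bq])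
    (by intro i hi; fin_cases i <;> simpa) D (by simp [Finset.sum_insert]; omega)
  simpa using this


lemma cbnd_det {n : Type*} [Fintype n] [DecidableEq n] (M : Matrix n n (Polynomial ℝ))
    (b : n → n → ℤ) (h : ∀ i j, CBnd (M i j) (b i j)) (B : ℤ)
    (hB : ∀ σ : Equiv.Perm n, (∑ i, b (σ i) i) ≤ B) : CBnd M.det B := by
  intro t ht
  rw [Matrix.det_apply, Polynomial.finset_sum_coeff]
  apply Finset.sum_eq_zero
  intro σ _
  rw [Polynomial.coeff_smul,
    cbnd_prod Finset.univ _ (fun i => b (σ i) i) (fun i _ => h _ _) t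
      (lt_of_le_of_lt (hB σ) ht), smul_zero]

lemma coeff_det_cbnd {n : Type*} [Fintype n] [DecidableEq n] (M : Matrix n n (Polynomial ℝ))
    (r c : n → ℤ) (h : ∀ i j, CBnd (M i j) (r i + c j)) (D : ℕ)
    (hD : (D : ℤ) = ∑ i, r i + ∑ j, c j) :
    M.det.coeff D = Matrix.det (Matrix.of fun i j => (M i j).coeff ((r i + c j).toNat)) := by
  rw [Matrix.det_apply, Matrix.det_apply, Polynomial.finset_sum_coeff]
  apply Finset.sum_congr rfl
  intro σ _
  rw [Polynomial.coeff_smul,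
    coeff_prod_cbnd Finset.univ _ (fun i => r (σ i) + c i) (fun i _ => h _ _) D
      (by rw [hD, ← Equiv.sum_comp σ r, Finset.sum_add_distrib])]
  rfl


lemma cbnd_iterate_derivative {p : Polynomial ℝ} {b : ℤ} (h : CBnd p b) (j : ℕ) :
    CBnd (Polynomial.derivative^[j] p) (b - j) := by
  intro t ht
  rw [Polynomial.coeff_iterate_derivative, h (t + j) (by push_cast; omega), smul_zero]

lemma coeff_iterate_derivative_top {p : Polynomial ℝ} {d : ℕ} (h : CBnd p (d : ℤ)) (j : ℕ) :
    (Polynomial.derivative^[j] p).coeff (((d : ℤ) - j).toNat)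
      = (d.descFactorial j : ℝ) * p.coeff d := by
  rw [Polynomial.coeff_iterate_derivative]
  by_cases hj : j ≤ d
  · have h1 : ((d : ℤ) - j).toNat = d - j := by omega
    have h2 : d - j + j = d := by omega
    rw [h1, h2, nsmul_eq_mul]
  · have h1 : ((d : ℤ) - j).toNat = 0 := by omega
    rw [h1, zero_add, h j (by exact_mod_cast by omega : (d : ℤ) < (j:ℤ)), smul_zero,
      Nat.descFactorial_eq_zero_iff_lt.mpr (by omega), Nat.cast_zero, zero_mul]

lemma wrp_cbnd {m : ℕ} (f : Fin m → Polynomial ℝ) (d : Fin m → ℕ)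
    (hf : ∀ i, CBnd (f i) (d i)) :
    CBnd (WrP f) (∑ i, (d i : ℤ) - ∑ j : Fin m, (j.1 : ℤ)) := by
  apply cbnd_det _ (fun i j => (d i : ℤ) - (j.1 : ℤ))
  · intro i j
    exact cbnd_iterate_derivative (hf i) j.1
  · intro σ
    rw [Finset.sum_sub_distrib, Equiv.sum_comp σ (fun i => (d i : ℤ))]

lemma wrp_coeff {m : ℕ} (f : Fin m → Polynomial ℝ) (d : Fin m → ℕ)
    (hf : ∀ i, CBnd (f i) (d i)) (D : ℕ)
    (hD : (D : ℤ) = ∑ i, (d i : ℤ) - ∑ j : Fin m, (j.1 : ℤ)) :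
    (WrP f).coeff D = (∏ i, (f i).coeff (d i)) *
      ∏ i : Fin m, ∏ j ∈ Finset.Ioi i, ((d j : ℝ) - (d i : ℝ)) := by
  rw [WrP, coeff_det_cbnd (Matrix.of fun i j : Fin m => (Polynomial.derivative)^[j.1] (f i))
    (fun i => (d i : ℤ)) (fun j => -(j.1 : ℤ))
    (fun i j => cbnd_iterate_derivative (hf i) j.1) D
    (by simp only [Finset.sum_neg_distrib, ← sub_eq_add_neg]; exact hD)]
  have h2 : (Matrix.of fun i j : Fin m =>
      ((Matrix.of fun i j : Fin m => (Polynomial.derivative)^[j.1] (f i)) i j).coeff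
        (((d i : ℤ) + -(j.1 : ℤ)).toNat))
      = Matrix.of fun i j : Fin m =>
          (f i).coeff (d i) * ((descPochhammer ℝ j.1).eval ((d i : ℕ) : ℝ)) := by
    ext i j
    simp only [Matrix.of_apply]
    rw [show ((d i : ℤ) + -(j.1:ℤ)) = ((d i : ℤ) - j.1) by ring,
      coeff_iterate_derivative_top (hf i) j.1, descPochhammer_eval_eq_descFactorial, mul_comm]
  rw [h2]
  refine (Matrix.det_mul_column (fun i => (f i).coeff (d i))
    (fun i j : Fin m => (descPochhammer ℝ j.1).eval ((d i : ℕ) : ℝ))).trans ?_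
  congr 1
  exact (Matrix.det_eval_matrixOfPolynomials_eq_det_vandermonde
      (fun i : Fin m => ((d i : ℕ) : ℝ)) (fun j => descPochhammer ℝ j.1)
      (fun j => descPochhammer_natDegree ℝ j.1)
      (fun j => monic_descPochhammer ℝ j.1)).symm.trans
    (Matrix.det_vandermonde _)


lemma hermN_spec : ∀ n : ℕ, CBnd (hermN n) (n : ℤ) ∧ (hermN n).coeff n = 2 ^ n := by
  intro n
  induction n using Nat.strong_induction_on with
  | _ n ih =>
    match n with
    | 0 =>
      constructor
      · intro t ht
        have : t ≠ 0 := by omega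
        simp [hermN, Polynomial.coeff_one, this]
      · simp [hermN]
    | 1 =>
      constructor
      · intro t ht
        have h2 : 2 ≤ t := by omega
        rw [hermN, Polynomial.coeff_C_mul, Polynomial.coeff_X]
        have h1 : ¬ (1 = t) := by omega
        simp [h1]
      · simp [hermN]
    | (n + 2) =>
      obtain ⟨ih1b, ih1c⟩ := ih (n + 1) (by omega)
      obtain ⟨ih0b, ih0c⟩ := ih n (by omega)
      have hco : ∀ t : ℕ, (hermN (n+2)).coeff t
          = 2 * (Polynomial.X * hermN (n+1)).coeff t - (2 * ((n:ℝ)+1)) * (hermN n).coeff t := by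
        intro t
        rw [hermN]
        rw [Polynomial.coeff_sub, mul_assoc, Polynomial.coeff_C_mul, Polynomial.coeff_C_mul]
      constructor
      · intro t ht
        have ht2 : 3 + n ≤ t := by omega
        rw [hco]
        match t, ht2 with
        | (s + 1), _ =>
          rw [Polynomial.coeff_X_mul, ih1b s (by push_cast; omega), ih0b (s+1) (by push_cast; omega)]
          ring
      · rw [hco, Polynomial.coeff_X_mul, ih1c, ih0b (n + 2) (by push_cast; omega)]
        ring
lemma herm_nat (j : ℕ) : Herm (j : ℤ) = hermN j := by simp [Herm]


def htilP (k : ℕ → ℕ) (l j : ℕ) : Polynomial ℝ :=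
  WrP (fun i : Fin (l - 1) => Herm (k (if i.1 + 1 < j then i.1 + 1 else i.1 + 2) : ℤ))

def dop (p : Polynomial ℝ) : Polynomial ℝ :=
  Polynomial.derivative p - Polynomial.C 2 * (Polynomial.X * p)

lemma iteratedDeriv_polyeval (P : Polynomial ℝ) (j : ℕ) :
    iteratedDeriv j (fun x => P.eval x) = fun x => (Polynomial.derivative^[j] P).eval x := by
  induction j generalizing P with
  | zero => simp
  | succ j ih =>
      rw [iteratedDeriv_succ']
      have hd : deriv (fun x => P.eval x) = fun x => (Polynomial.derivative P).eval x := by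
        funext x; exact (P.hasDerivAt x).deriv
      rw [hd, ih, Function.iterate_succ_apply]

lemma wr_eval {m : ℕ} (g : Fin m → Polynomial ℝ) (x : ℝ) :
    Wr (fun i => fun t => (g i).eval t) x = (WrP g).eval x := by
  rw [Wr, WrP]
  rw [show Polynomial.eval x (Matrix.of fun i j : Fin m => (Polynomial.derivative)^[j.1] (g i)).det
      = (Polynomial.evalRingHom x) (Matrix.of fun i j : Fin m =>
        (Polynomial.derivative)^[j.1] (g i)).det from rfl,
    RingHom.map_det]
  congr 1
  ext i j
  simp only [RingHom.mapMatrix_apply, Matrix.map_apply, Matrix.of_apply, coe_evalRingHom]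
  rw [congrFun (iteratedDeriv_polyeval (g i) j.1) x]

lemma htil_eval (k : ℕ → ℕ) (l j : ℕ) : htil k l j = fun x => (htilP k l j).eval x := by
  funext x
  rw [htil, htilP, ← wr_eval]
  rfl

lemma derivE (q : Polynomial ℝ) : deriv (fun t : ℝ => Real.exp (-t ^ 2) * q.eval t)
    = fun t => Real.exp (-t ^ 2) * (dop q).eval t := by
  funext t
  have h1 : HasDerivAt (fun t : ℝ => -t ^ 2) (-(2 * t)) t := by
    have h0 : HasDerivAt (-fun x : ℝ => x ^ 2) (-(2 * t)) t := by
      simpa using (hasDerivAt_pow 2 t).neg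
    exact h0
  have h2 := h1.exp
  have h3 : HasDerivAt (fun t : ℝ => q.eval t) ((Polynomial.derivative q).eval t) t :=
    q.hasDerivAt t
  have h4 := h2.mul h3
  rw [show (fun t : ℝ => Real.exp (-t ^ 2) * q.eval t)
      = ((fun x => Real.exp (-x ^ 2)) * fun t => q.eval t) from rfl, h4.deriv]
  simp only [dop, Polynomial.eval_sub, Polynomial.eval_mul, Polynomial.eval_C,
    Polynomial.eval_X]
  ring

lemma iterE (p : Polynomial ℝ) (j : ℕ) :
    iteratedDeriv j (fun t : ℝ => Real.exp (-t ^ 2) * p.eval t)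
      = fun t => Real.exp (-t ^ 2) * ((dop^[j] p).eval t) := by
  induction j generalizing p with
  | zero => simp
  | succ j ih => rw [iteratedDeriv_succ', derivE, ih, Function.iterate_succ_apply]

def QQmat (k : ℕ → ℕ) (l : ℕ) (p : Polynomial ℝ) :
    Matrix (Fin (l+1)) (Fin (l+1)) (Polynomial ℝ) :=
  Matrix.of fun i j =>
    (Fin.snoc (fun i' : Fin l => Polynomial.derivative^[j.1] (htilP k l (i'.1+1)))
      (dop^[j.1] p) : Fin (l+1) → Polynomial ℝ) i

lemma wr_fact (k : ℕ → ℕ) (l : ℕ) (p : Polynomial ℝ) (x : ℝ) :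
    Wr (Fin.snoc (fun i : Fin l => htil k l (i.1 + 1))
      (fun t => Real.exp (-t ^ 2) * p.eval t)) x
    = Real.exp (-x ^ 2) * (QQmat k l p).det.eval x := by
  rw [Wr]
  have hM : (Matrix.of fun i j : Fin (l+1) => iteratedDeriv (j : ℕ)
      ((Fin.snoc (fun i : Fin l => htil k l (i.1 + 1))
        (fun t => Real.exp (-t ^ 2) * p.eval t) : Fin (l+1) → ℝ → ℝ) i) x)
      = Matrix.updateRow ((QQmat k l p).map (Polynomial.evalRingHom x)) (Fin.last l)
          (Real.exp (-x ^ 2) • fun j : Fin (l+1) => (dop^[j.1] p).eval x) := by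
    ext i j
    refine Fin.lastCases ?_ ?_ i
    · rw [Matrix.of_apply, Fin.snoc_last, Matrix.updateRow_self]
      rw [congrFun (iterE p j.1) x]
      rfl
    · intro i'
      rw [Matrix.of_apply, Fin.snoc_castSucc,
        Matrix.updateRow_ne (Fin.castSucc_lt_last i').ne]
      rw [htil_eval, congrFun (iteratedDeriv_polyeval (htilP k l (i'.1 + 1)) j.1) x]
      simp only [Matrix.map_apply, QQmat, Matrix.of_apply, Fin.snoc_castSucc, coe_evalRingHom]
  rw [hM, Matrix.det_updateRow_smul]
  have hrow : (fun j : Fin (l+1) => (dop^[j.1] p).eval x)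
      = ((QQmat k l p).map (Polynomial.evalRingHom x)) (Fin.last l) := by
    funext j
    simp only [Matrix.map_apply, QQmat, Matrix.of_apply, Fin.snoc_last, coe_evalRingHom]
  rw [hrow, Matrix.updateRow_eq_self]
  congr 1
  rw [show ((QQmat k l p).map ⇑(Polynomial.evalRingHom x)) = (Polynomial.evalRingHom x).mapMatrix (QQmat k l p) from rfl,
    ← RingHom.map_det]
  rfl


section karith
variable (k : ℕ → ℕ) (l : ℕ)

lemma k_lt (hmono : ∀ i, 1 ≤ i → i < l → k i < k (i + 1)) :
    ∀ b a, 1 ≤ a → a < b → b ≤ l → k a < k b := by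
  intro b
  induction b with
  | zero => intro a _ h _; omega
  | succ b ih =>
      intro a ha hab hbl
      rcases Nat.lt_succ_iff_lt_or_eq.mp hab with h | h
      · exact lt_trans (ih a ha h (by omega)) (hmono b (by omega) (by omega))
      · subst h; exact hmono a ha (by omega)

lemma k_ge (hk1 : 1 ≤ k 1) (hmono : ∀ i, 1 ≤ i → i < l → k i < k (i + 1)) :
    ∀ i, 1 ≤ i → i ≤ l → i ≤ k i := by
  intro i
  induction i with
  | zero => omega
  | succ i ih =>
      intro _ hil
      rcases Nat.eq_zero_or_pos i with h0 | h0
      · subst h0; simpa using hk1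
      · have h1 := ih (by omega) (by omega)
        have h2 := hmono i (by omega) (by omega)
        omega

/-- index function for the `j`-th reduced Wronskian -/
def idxf (j : ℕ) (i : ℕ) : ℕ := if i + 1 < j then i + 1 else i + 2

/-- degree (as ℤ) of `htilP k l j` -/
def NZ (j : ℕ) : ℤ :=
  (∑ i : Fin (l - 1), (k (idxf j i.1) : ℤ)) - ∑ i : Fin (l - 1), (i.1 : ℤ)

/-- degree (as ℕ) function for the rows of `htilP` -/
def dtil (j : ℕ) (i : Fin (l - 1)) : ℕ := k (idxf j i.1)

variable {k l}
variable (hl : 1 ≤ l) (hk1 : 1 ≤ k 1) (hmono : ∀ i, 1 ≤ i → i < l → k i < k (i + 1))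
include hl hk1 hmono

lemma idxf_mem {j : ℕ} (i : Fin (l - 1)) : 1 ≤ idxf j i.1 ∧ idxf j i.1 ≤ l := by
  have := i.2
  unfold idxf
  split <;> omega

lemma dtil_lt {j : ℕ} {i i' : Fin (l - 1)} (h : i < i') : dtil k l j i < dtil k l j i' := by
  have h2 := i'.2
  have hii : (i : ℕ) < (i' : ℕ) := h
  apply k_lt k l hmono _ _ (idxf_mem hl hk1 hmono i).1 _ (idxf_mem hl hk1 hmono i').2
  unfold idxf
  split <;> split <;> omega

lemma herm_dtil (j : ℕ) (i : Fin (l - 1)) :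
    Herm ((k (idxf j i.1)) : ℤ) = hermN (dtil k l j i) := herm_nat _

lemma htilP_cbnd (j : ℕ) : CBnd (htilP k l j) (NZ k l j) := by
  have h := wrp_cbnd (fun i : Fin (l-1) => Herm ((k (idxf j i.1)) : ℤ)) (dtil k l j)
    (fun i => by
      show CBnd (Herm ((k (idxf j i.1)) : ℤ)) _
      rw [herm_dtil (hl := hl) (hk1 := hk1) (hmono := hmono)]
      exact (hermN_spec _).1)
  rw [htilP]
  exact h

lemma NZ_ge (j : ℕ) : (l : ℤ) - 1 ≤ NZ k l j := by
  have h1 : ∀ i : Fin (l - 1), (i.1 : ℤ) + 1 ≤ (k (idxf j i.1) : ℤ) := by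
    intro i
    have hm := idxf_mem hl hk1 hmono (j := j) i
    have h := k_ge (k := k) (l := l) hk1 hmono (idxf j i.1) hm.1 hm.2
    have h2 : i.1 + 1 ≤ idxf j i.1 := by unfold idxf; split <;> omega
    have h3 := le_trans h2 h
    push_cast
    omega
  have h2 : ∑ i : Fin (l-1), ((i.1 : ℤ) + 1) ≤ ∑ i : Fin (l-1), (k (idxf j i.1) : ℤ) :=
    Finset.sum_le_sum (fun i _ => h1 i)
  rw [Finset.sum_add_distrib] at h2
  simp only [Finset.sum_const, Finset.card_univ, Fintype.card_fin, nsmul_eq_mul, mul_one] at h2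
  rw [NZ]
  omega

lemma htilP_coeff_ne (j : ℕ) : (htilP k l j).coeff (NZ k l j).toNat ≠ 0 := by
  have hD : (((NZ k l j).toNat : ℤ)) = ∑ i : Fin (l-1), (dtil k l j i : ℤ)
      - ∑ i : Fin (l-1), (i.1 : ℤ) := by
    have := NZ_ge hl hk1 hmono (k := k) (l := l) j
    rw [Int.toNat_of_nonneg (by omega)]
    rfl
  rw [show htilP k l j = WrP (fun i : Fin (l-1) => Herm ((k (idxf j i.1)) : ℤ)) from rfl]
  rw [wrp_coeff (fun i : Fin (l-1) => Herm ((k (idxf j i.1)) : ℤ)) (dtil k l j)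
    (fun i => by
      show CBnd (Herm ((k (idxf j i.1)) : ℤ)) _
      rw [herm_dtil (hl := hl) (hk1 := hk1) (hmono := hmono)]
      exact (hermN_spec _).1) _ hD]
  apply mul_ne_zero
  · apply Finset.prod_ne_zero_iff.mpr
    intro i _
    show (Herm ((k (idxf j i.1)) : ℤ)).coeff (dtil k l j i) ≠ 0
    rw [herm_dtil (hl := hl) (hk1 := hk1) (hmono := hmono), (hermN_spec _).2]
    positivity
  · apply Finset.prod_ne_zero_iff.mpr
    intro i _
    apply Finset.prod_ne_zero_iff.mpr
    intro i' hi'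
    rw [Finset.mem_Ioi] at hi'
    have := dtil_lt hl hk1 hmono (j := j) hi'
    have h2 : (dtil k l j i : ℝ) < dtil k l j i' := by exact_mod_cast this
    exact sub_ne_zero.mpr h2.ne'

lemma NZ_anti {j j' : ℕ} (hj : 1 ≤ j) (hjj : j < j') (hj'l : j' ≤ l) :
    NZ k l j' < NZ k l j := by
  rw [NZ, NZ]
  have hterm : ∀ i : Fin (l - 1), (k (idxf j' i.1) : ℤ) ≤ (k (idxf j i.1) : ℤ) := by
    intro i
    have h2 := i.2
    unfold idxf
    split <;> split
    · rfl
    · -- i+1 < j', ¬ i+1 < j : impossible? no: j ≤ i+1 < j'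
      have hkk : k (i.1 + 1) < k (i.1 + 2) :=
        k_lt k l hmono (i.1+2) (i.1+1) (by omega) (by omega) (by omega)
      push_cast; omega
    · omega
    · rfl
  have hstrict : ∃ i ∈ (Finset.univ : Finset (Fin (l-1))),
      (k (idxf j' i.1) : ℤ) < (k (idxf j i.1) : ℤ) := by
    refine ⟨⟨j - 1, by omega⟩, Finset.mem_univ _, ?_⟩
    have hj1 : (⟨j - 1, by omega⟩ : Fin (l-1)).1 + 1 = j := by simp; omega
    unfold idxf
    rw [hj1]
    have c1 : ¬ (j < j) := by omega
    have c2 : j < j' := hjj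
    rw [if_neg c1, if_pos c2]
    have : k j < k (j + 1) := hmono j hj (by omega)
    have hle : k j < k (j - 1 + 2) := by
      have : j - 1 + 2 = j + 1 := by omega
      rw [this]; exact hmono j hj (by omega)
    exact_mod_cast hle
  have := Finset.sum_lt_sum (fun i _ => hterm i) hstrict
  omega
end karith


lemma cbnd_dop {p : Polynomial ℝ} {b : ℤ} (h : CBnd p b) : CBnd (dop p) (b + 1) := by
  intro t ht
  rw [dop, Polynomial.coeff_sub, Polynomial.coeff_C_mul, Polynomial.coeff_derivative]
  cases t with
  | zero =>
      rw [h 1 (by omega), Polynomial.mul_coeff_zero, Polynomial.coeff_X_zero, zero_mul]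
      ring
  | succ s =>
      rw [Polynomial.coeff_X_mul, h (s + 2) (by push_cast at ht ⊢; omega),
        h s (by push_cast at ht ⊢; omega)]
      ring

lemma cbnd_dop_iter {p : Polynomial ℝ} {b : ℤ} (h : CBnd p b) (j : ℕ) :
    CBnd (dop^[j] p) (b + j) := by
  induction j with
  | zero => simpa using h
  | succ j ih =>
      rw [Function.iterate_succ_apply']
      have := cbnd_dop ih
      rwa [show b + (j:ℤ) + 1 = b + ((j:ℕ)+1 : ℕ) by push_cast; ring] at this

lemma coeff_dop_iter_top {p : Polynomial ℝ} {d : ℕ} (h : CBnd p (d : ℤ)) (j : ℕ) :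
    (dop^[j] p).coeff (d + j) = (-2 : ℝ) ^ j * p.coeff d := by
  induction j with
  | zero => simp
  | succ j ih =>
      rw [Function.iterate_succ_apply', dop, Polynomial.coeff_sub, Polynomial.coeff_C_mul]
      have hb := cbnd_dop_iter h j
      rw [show d + (j + 1) = (d + j) + 1 by ring, Polynomial.coeff_derivative,
        hb (d + j + 1 + 1) (by push_cast; omega), Polynomial.coeff_X_mul, ih]
      ring

end AuxLemmas

/-- The linear transformation `B` is injective on `U`. -/
theorem stmt_14 (l : ℕ) (hl : 1 ≤ l) (k : ℕ → ℕ) (hk1 : 1 ≤ k 1)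
    (hmono : ∀ i, 1 ≤ i → i < l → k i < k (i + 1))
    (p : Polynomial ℝ) (hp : p ∈ Uspan k l)
    (hBp : ∀ x : ℝ, eta k l x ≠ 0 → Bop k l (fun t => p.eval t) x = 0) :
    p = 0 := by
  classical
  by_contra hp0
  have hlc : p.coeff p.natDegree ≠ 0 := by
    intro h
    exact hp0 (Polynomial.leadingCoeff_eq_zero.mp h)
  -- Step A : `etaP k l ≠ 0`
  have hetaP : etaP k l ≠ 0 := by
    have hf : ∀ i : Fin l, CBnd (Herm ((k (i.1 + 1)) : ℤ)) ((k (i.1 + 1) : ℕ) : ℤ) := by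
      intro i
      rw [herm_nat]
      exact (hermN_spec _).1
    have hge : ∀ i : Fin l, (i.1 : ℤ) + 1 ≤ ((k (i.1 + 1) : ℕ) : ℤ) := by
      intro i
      have h1 := k_ge (k := k) (l := l) hk1 hmono (i.1 + 1) (by omega) (by have := i.2; omega)
      push_cast
      omega
    have hnn : (0 : ℤ) ≤ ∑ i : Fin l, ((k (i.1 + 1) : ℕ) : ℤ) - ∑ i : Fin l, (i.1 : ℤ) := by
      have h2 : ∑ i : Fin l, ((i.1 : ℤ) + 1) ≤ ∑ i : Fin l, ((k (i.1 + 1) : ℕ) : ℤ) :=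
        Finset.sum_le_sum (fun i _ => hge i)
      rw [Finset.sum_add_distrib] at h2
      simp only [Finset.sum_const, Finset.card_univ, Fintype.card_fin, nsmul_eq_mul,
        mul_one] at h2
      omega
    have hE : (((∑ i : Fin l, ((k (i.1 + 1) : ℕ) : ℤ) - ∑ i : Fin l, (i.1 : ℤ)).toNat : ℤ))
        = ∑ i : Fin l, ((k (i.1 + 1) : ℕ) : ℤ) - ∑ i : Fin l, (i.1 : ℤ) :=
      Int.toNat_of_nonneg hnn
    have hco := wrp_coeff (fun i : Fin l => Herm ((k (i.1 + 1)) : ℤ)) (fun i => k (i.1 + 1))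
      hf _ hE
    have hne : (WrP (fun i : Fin l => Herm ((k (i.1 + 1)) : ℤ))).coeff
        ((∑ i : Fin l, ((k (i.1 + 1) : ℕ) : ℤ) - ∑ i : Fin l, (i.1 : ℤ)).toNat) ≠ 0 := by
      rw [hco]
      apply mul_ne_zero
      · apply Finset.prod_ne_zero_iff.mpr
        intro i _
        show (Herm ((k (i.1 + 1)) : ℤ)).coeff (k (i.1 + 1)) ≠ 0
        rw [herm_nat, (hermN_spec _).2]
        positivity
      · apply Finset.prod_ne_zero_iff.mpr
        intro i _
        apply Finset.prod_ne_zero_iff.mpr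
        intro i' hi'
        rw [Finset.mem_Ioi] at hi'
        have hlt : k (i.1 + 1) < k (i'.1 + 1) := by
          apply k_lt k l hmono (i'.1 + 1) (i.1 + 1) (by omega)
            (by exact_mod_cast Nat.add_lt_add_right hi' 1) (by have := i'.2; omega)
        have h2 : ((k (i.1 + 1) : ℕ) : ℝ) < ((k (i'.1 + 1) : ℕ) : ℝ) := by exact_mod_cast hlt
        exact sub_ne_zero.mpr h2.ne'
    intro h0
    rw [show etaP k l = WrP (fun i : Fin l => Herm ((k (i.1 + 1)) : ℤ)) from rfl] at h0
    rw [h0] at hne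
    simp at hne
  -- Step B : the polynomial determinant vanishes identically
  have hQQ : (QQmat k l p).det = 0 := by
    apply Polynomial.eq_zero_of_infinite_isRoot
    have hsub : {x : ℝ | Polynomial.IsRoot (etaP k l) x}ᶜ ⊆
        {x : ℝ | Polynomial.IsRoot ((QQmat k l p).det) x} := by
      intro x hx
      simp only [Set.mem_compl_iff, Set.mem_setOf_eq, Polynomial.IsRoot] at hx ⊢
      have heta : eta k l x = (etaP k l).eval x := by
        rw [show eta k l x
            = Wr (fun i : Fin l => fun t => (Herm ((k (i.1 + 1)) : ℤ)).eval t) x from rfl,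
          wr_eval]
        rfl
      have hetax : eta k l x ≠ 0 := by rw [heta]; exact hx
      have hB := hBp x hetax
      simp only [Bop] at hB
      have hcne : ((-1 : ℝ) ^ (l / 2) * Real.exp (x ^ 2) / (eta k l x) ^ l) ≠ 0 :=
        div_ne_zero (mul_ne_zero (pow_ne_zero _ (by norm_num)) (Real.exp_ne_zero _))
          (pow_ne_zero _ hetax)
      have hW : Wr (Fin.snoc (fun i : Fin l => htil k l (i.1 + 1))
          (fun t => Real.exp (-t ^ 2) * p.eval t)) x = 0 := by
        rcases mul_eq_zero.mp hB with h | h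
        · exact absurd h hcne
        · exact h
      rw [wr_fact] at hW
      rcases mul_eq_zero.mp hW with h | h
      · exact absurd h (Real.exp_ne_zero _)
      · exact h
    exact ((Polynomial.finite_setOf_isRoot hetaP).infinite_compl).mono hsub
  -- Step C : a particular coefficient of the determinant is a nonzero multiple of the
  -- leading coefficient of `p`.
  have hSZnn : ∀ i : Fin l, (0 : ℤ) ≤ NZ k l (i.1 + 1) := by
    intro i
    have := NZ_ge (k := k) (l := l) hl hk1 hmono (i.1 + 1)
    omega
  have hSZ : (l : ℤ) * ((l : ℤ) - 1) ≤ ∑ i : Fin l, NZ k l (i.1 + 1) := by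
    calc (l : ℤ) * ((l : ℤ) - 1) = ∑ _i : Fin l, ((l : ℤ) - 1) := by
          rw [Finset.sum_const, Finset.card_univ, Fintype.card_fin, nsmul_eq_mul]
      _ ≤ ∑ i : Fin l, NZ k l (i.1 + 1) :=
          Finset.sum_le_sum (fun i _ => NZ_ge hl hk1 hmono _)
  have hSj : 2 * (∑ t : Fin (l + 1), (t.1 : ℤ)) = (l : ℤ) * ((l : ℤ) + 1) := by
    have hg := Finset.sum_range_id_mul_two (l + 1)
    have h1 : (∑ t : Fin (l + 1), (t.1 : ℤ)) = ((∑ i ∈ Finset.range (l + 1), i : ℕ) : ℤ) := by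
      rw [Fin.sum_univ_eq_sum_range (fun i => (i : ℤ)) (l + 1)]
      push_cast
      rfl
    rw [h1]
    rw [show (l + 1) * (l + 1 - 1) = (l + 1) * l from rfl] at hg
    have h4 : ((∑ i ∈ Finset.range (l + 1), i : ℕ) : ℤ) * 2 = ((l : ℤ) + 1) * l := by
      exact_mod_cast congrArg (fun t : ℕ => (t : ℤ)) hg
    linarith
  have hsplit : (∑ t : Fin (l + 1), (t.1 : ℤ)) = (∑ t : Fin l, (t.1 : ℤ)) + l := by
    rw [Fin.sum_univ_castSucc]
    simp
  have hDnn : (0 : ℤ) ≤ (∑ i : Fin l, NZ k l (i.1 + 1)) + p.natDegree + 2 * l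
      - ∑ t : Fin (l + 1), (t.1 : ℤ) := by
    nlinarith [hSZ, hSj, Int.natCast_nonneg p.natDegree, (by exact_mod_cast hl : (1 : ℤ) ≤ l)]
  set D : ℕ := ((∑ i : Fin l, NZ k l (i.1 + 1)) + p.natDegree + 2 * l
      - ∑ t : Fin (l + 1), (t.1 : ℤ)).toNat with hDdef
  have hD : (D : ℤ) = (∑ i : Fin l, NZ k l (i.1 + 1)) + p.natDegree + 2 * l
      - ∑ t : Fin (l + 1), (t.1 : ℤ) := Int.toNat_of_nonneg hDnn
  -- bounds for the minors
  have hminor : ∀ j : Fin (l + 1),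
      CBnd ((QQmat k l p).submatrix (Fin.last l).succAbove j.succAbove).det
        ((∑ i : Fin l, NZ k l (i.1 + 1)) - (∑ t : Fin (l + 1), (t.1 : ℤ)) + j.1) := by
    intro j
    apply cbnd_det _ (fun i j' => NZ k l (i.1 + 1) - ((j.succAbove j').1 : ℤ))
    · intro i j'
      have hent : ((QQmat k l p).submatrix (Fin.last l).succAbove j.succAbove) i j'
          = Polynomial.derivative^[(j.succAbove j').1] (htilP k l (i.1 + 1)) := by
        simp [QQmat, Matrix.submatrix_apply, Fin.succAbove_last, Fin.snoc_castSucc]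
      rw [hent]
      exact cbnd_iterate_derivative (htilP_cbnd hl hk1 hmono _) _
    · intro σ
      have h1 : ∑ i : Fin l, (NZ k l ((σ i).1 + 1) - ((j.succAbove i).1 : ℤ))
          = (∑ i : Fin l, NZ k l (i.1 + 1)) - ∑ i : Fin l, ((j.succAbove i).1 : ℤ) := by
        rw [Finset.sum_sub_distrib, Equiv.sum_comp σ (fun i : Fin l => NZ k l (i.1 + 1))]
      have h2 := Fin.sum_univ_succAbove (fun t : Fin (l + 1) => (t.1 : ℤ)) j
      rw [h1]
      omega
  -- compute the coefficient of the determinant at `D`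
  have hEnn : (0 : ℤ) ≤ (∑ i : Fin l, NZ k l (i.1 + 1))
      - (∑ t : Fin (l + 1), (t.1 : ℤ)) + l := by
    nlinarith [hSZ, hSj, (by exact_mod_cast hl : (1 : ℤ) ≤ l)]
  have hcoeffQQ : ((QQmat k l p).det).coeff D ≠ 0 := by
    rw [Matrix.det_succ_row (QQmat k l p) (Fin.last l), Polynomial.finset_sum_coeff,
      Fin.sum_univ_castSucc]
    have hzero : ∀ j : Fin l,
        ((-1 : Polynomial ℝ) ^ (((Fin.last l) : ℕ) + ((Fin.castSucc j) : ℕ)) *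
          QQmat k l p (Fin.last l) (Fin.castSucc j) *
          ((QQmat k l p).submatrix (Fin.last l).succAbove
            (Fin.castSucc j).succAbove).det).coeff D = 0 := by
      intro j
      rw [mul_assoc, show ((-1 : Polynomial ℝ) ^ (((Fin.last l) : ℕ) + ((Fin.castSucc j) : ℕ)))
          = Polynomial.C ((-1 : ℝ) ^ (((Fin.last l) : ℕ) + ((Fin.castSucc j) : ℕ))) by
            rw [map_pow, map_neg, map_one],
        Polynomial.coeff_C_mul]
      have hA : QQmat k l p (Fin.last l) (Fin.castSucc j) = dop^[j.1] p := by
        simp [QQmat, Fin.snoc_last]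
      rw [hA]
      have hcb := cbnd_mul (cbnd_dop_iter (cbnd_of_natDegree_le (p := p) (le_refl _)) j.1)
        (hminor (Fin.castSucc j))
      rw [hcb D (by
        rw [hD]
        simp only [Fin.coe_castSucc]
        have := j.2
        omega), mul_zero]
    rw [Finset.sum_eq_zero (fun j _ => hzero j), zero_add]
    -- the last term
    rw [mul_assoc, show ((-1 : Polynomial ℝ) ^ (((Fin.last l) : ℕ) + ((Fin.last l) : ℕ)))
        = Polynomial.C ((-1 : ℝ) ^ (((Fin.last l) : ℕ) + ((Fin.last l) : ℕ))) by
          rw [map_pow, map_neg, map_one],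
      Polynomial.coeff_C_mul]
    have hA : QQmat k l p (Fin.last l) (Fin.last l) = dop^[l] p := by
      simp [QQmat, Fin.snoc_last]
    rw [hA]
    rw [coeff_mul_cbnd (cbnd_dop_iter (cbnd_of_natDegree_le (p := p) (le_refl _)) l)
      (hminor (Fin.last l)) D (by rw [hD]; simp only [Fin.val_last]; ring)]
    apply mul_ne_zero (pow_ne_zero _ (by norm_num : (-1 : ℝ) ≠ 0))
    apply mul_ne_zero
    · rw [show ((p.natDegree : ℤ) + (l : ℤ)).toNat = p.natDegree + l by omega,
        coeff_dop_iter_top (cbnd_of_natDegree_le (p := p) (le_refl _)) l]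
      exact mul_ne_zero (pow_ne_zero _ (by norm_num)) hlc
    · -- the minor at the last column is the Wronskian of the `htilP`s
      have hlast : ((QQmat k l p).submatrix (Fin.last l).succAbove (Fin.last l).succAbove)
          = Matrix.of (fun i j' : Fin l =>
              Polynomial.derivative^[j'.1] (htilP k l (i.1 + 1))) := by
        ext i j'
        simp [QQmat, Matrix.submatrix_apply, Fin.succAbove_last, Fin.snoc_castSucc]
      rw [hlast]
      rw [show (Matrix.of (fun i j' : Fin l =>
          Polynomial.derivative^[j'.1] (htilP k l (i.1 + 1)))).det
        = WrP (fun i : Fin l => htilP k l (i.1 + 1)) from rfl]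
      simp only [Fin.val_last]
      have hfj : ∀ i : Fin l, CBnd (htilP k l (i.1 + 1))
          (((NZ k l (i.1 + 1)).toNat : ℕ) : ℤ) := by
        intro i
        have := hSZnn i
        rw [Int.toNat_of_nonneg this]
        exact htilP_cbnd hl hk1 hmono _
      have hEt : ((((∑ i : Fin l, NZ k l (i.1 + 1))
          - (∑ t : Fin (l + 1), (t.1 : ℤ)) + l).toNat : ℤ))
          = ∑ i : Fin l, (((NZ k l (i.1 + 1)).toNat : ℕ) : ℤ) - ∑ j' : Fin l, (j'.1 : ℤ) := by
        rw [Int.toNat_of_nonneg hEnn]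
        have hs : ∑ i : Fin l, (((NZ k l (i.1 + 1)).toNat : ℕ) : ℤ)
            = ∑ i : Fin l, NZ k l (i.1 + 1) :=
          Finset.sum_congr rfl (fun i _ => Int.toNat_of_nonneg (hSZnn i))
        rw [hs]
        omega
      rw [wrp_coeff (fun i : Fin l => htilP k l (i.1 + 1))
        (fun i => (NZ k l (i.1 + 1)).toNat) hfj _ hEt]
      apply mul_ne_zero
      · apply Finset.prod_ne_zero_iff.mpr
        intro i _
        exact htilP_coeff_ne hl hk1 hmono _
      · apply Finset.prod_ne_zero_iff.mpr
        intro i _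
        apply Finset.prod_ne_zero_iff.mpr
        intro i' hi'
        rw [Finset.mem_Ioi] at hi'
        have hlt : NZ k l (i'.1 + 1) < NZ k l (i.1 + 1) := by
          apply NZ_anti hl hk1 hmono (by omega)
            (by exact_mod_cast Nat.add_lt_add_right hi' 1) (by have := i'.2; omega)
        have h2 : ((NZ k l (i'.1 + 1)).toNat : ℝ) < ((NZ k l (i.1 + 1)).toNat : ℝ) := by
          have h3 : (NZ k l (i'.1 + 1)).toNat < (NZ k l (i.1 + 1)).toNat := by
            have := hSZnn i'
            omega
          exact_mod_cast h3
        exact sub_ne_zero.mpr h2.ne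
  rw [hQQ] at hcoeffQQ
  simp at hcoeffQQ

end
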